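/- Let (F̃, d) be a homotopically fine ℤ-graded differential presheaf on a compact space X satisfying the surjectivity and injectivity properties. Then the natural morphism from the cohomology of global presheaf sections H^p(F̃(X), d) to the hypercohomology ℍ^p(X, (F, d)) of the associated differential sheaf is an isomorphism for every p. -/
import Mathlib


/-!
Statement 5 (Proposition A.5 of the paper): for a homotopically fine ℤ-graded
differential presheaf `(F̃, d)` on a compact space `X` satisfying the
surjectivity and injectivity properties, the natural morphism
`H^p(F̃(X), d) → ℍ^p(X, (F, d))` is an isomorphism for every `p`; by
Theorem A.4, the hypercohomology of the associated differential sheaf is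
computed by the cohomology of its global sections, which we realize
concretely as locally representable families of germs.

The isomorphism on cohomology is expressed representative-wise (the natural
map is a chain map, it is surjective and injective on cohomology).
-/

open TopologicalSpace

namespace Stmt5

/-- A presheaf of `K`-vector spaces on `X`. -/
structure Psh (K : Type) [Field K] (X : Type) [TopologicalSpace X] where
  sec : Opens X → Type
  [acg : ∀ U, AddCommGroup (sec U)]
  [mod : ∀ U, Module K (sec U)]
  res : ∀ {U V : Opens X}, V ≤ U → sec U →ₗ[K] sec V
  res_rfl : ∀ (U : Opens X) (s : sec U), res (le_refl U) s = s
  res_res : ∀ {U V W : Opens X} (hVU : V ≤ U) (hWV : W ≤ V) (s : sec U),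
      res hWV (res hVU s) = res (hWV.trans hVU) s

attribute [instance] Psh.acg Psh.mod

variable {K : Type} [Field K] {X : Type} [TopologicalSpace X]

/-- The germ relation at `x`. -/
def germSetoid (F : Psh K X) (x : X) :
    Setoid (Σ U : {U : Opens X // x ∈ U}, F.sec U.1) where
  r a b := ∃ (W : Opens X) (hxW : x ∈ W) (h1 : W ≤ a.1.1) (h2 : W ≤ b.1.1),
    F.res h1 a.2 = F.res h2 b.2
  iseqv := by
    constructor
    · rintro ⟨U, s⟩
      exact ⟨U.1, U.2, le_rfl, le_rfl, rfl⟩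
    · rintro a b ⟨W, hxW, h1, h2, h⟩
      exact ⟨W, hxW, h2, h1, h.symm⟩
    · rintro a b c ⟨W, hxW, h1, h2, h⟩ ⟨W', hxW', h1', h2', h'⟩
      refine ⟨W ⊓ W', ⟨hxW, hxW'⟩, inf_le_left.trans h1, inf_le_right.trans h2', ?_⟩
      rw [← F.res_res h1 inf_le_left, ← F.res_res h2' inf_le_right, h, ← h',
        F.res_res, F.res_res]

/-- The stalk of (the sheafification of) `F` at `x`. -/
def Stalk (F : Psh K X) (x : X) : Type := Quotient (germSetoid F x)

/-- The germ of a section at a point. -/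
def germ (F : Psh K X) {U : Opens X} (x : X) (hx : x ∈ U) (s : F.sec U) :
    Stalk F x := Quotient.mk _ ⟨⟨U, hx⟩, s⟩

theorem germ_ext (F : Psh K X) {U V W : Opens X} {x : X}
    (hxU : x ∈ U) (hxV : x ∈ V) (s : F.sec U) (t : F.sec V)
    (hxW : x ∈ W) (hWU : W ≤ U) (hWV : W ≤ V)
    (h : F.res hWU s = F.res hWV t) :
    germ F x hxU s = germ F x hxV t := Quotient.sound ⟨W, hxW, hWU, hWV, h⟩

theorem mem_inf' {U V : Opens X} {x : X} (hU : x ∈ U) (hV : x ∈ V) :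
    x ∈ U ⊓ V := ⟨hU, hV⟩

variable {F : Psh K X} {x : X}

protected noncomputable def Stalk.add (a b : Stalk F x) : Stalk F x :=
  Quotient.lift₂
    (fun a b => germ F x (mem_inf' a.1.2 b.1.2)
      (F.res inf_le_left a.2 + F.res inf_le_right b.2))
    (by
      rintro a₁ a₂ b₁ b₂ ⟨W, hxW, h1, h2, h⟩ ⟨W', hxW', h1', h2', h'⟩
      refine germ_ext F _ _ _ _ (mem_inf' hxW hxW')
        (le_inf (inf_le_left.trans h1) (inf_le_right.trans h1'))
        (le_inf (inf_le_left.trans h2) (inf_le_right.trans h2')) ?_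
      have e1 := congrArg (F.res (inf_le_left : W ⊓ W' ≤ W)) h
      have e2 := congrArg (F.res (inf_le_right : W ⊓ W' ≤ W')) h'
      rw [F.res_res, F.res_res] at e1
      rw [F.res_res, F.res_res] at e2
      simp only [map_add, F.res_res]
      rw [e1, e2]) a b

protected noncomputable def Stalk.neg (a : Stalk F x) : Stalk F x :=
  Quotient.map (fun a => ⟨a.1, -a.2⟩)
    (by
      rintro a b ⟨W, hxW, h1, h2, h⟩
      exact ⟨W, hxW, h1, h2, by rw [map_neg, map_neg, h]⟩) a

noncomputable instance : Zero (Stalk F x) := ⟨germ F x (Opens.mem_top x) (0 : F.sec ⊤)⟩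
noncomputable instance : Add (Stalk F x) := ⟨Stalk.add⟩
noncomputable instance : Neg (Stalk F x) := ⟨Stalk.neg⟩

noncomputable instance : AddCommGroup (Stalk F x) where
  add := (· + ·)
  zero := 0
  neg := Neg.neg
  nsmul := nsmulRec
  zsmul := zsmulRec
  add_assoc a b c := by
    induction a using Quotient.inductionOn with | _ a =>
    induction b using Quotient.inductionOn with | _ b =>
    induction c using Quotient.inductionOn with | _ c =>
    refine germ_ext F _ _ _ _
      (mem_inf' (mem_inf' a.1.2 b.1.2) c.1.2)
      le_rfl (by simp [inf_assoc]) ?_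
    simp only [map_add, F.res_res]
    exact add_assoc _ _ _
  zero_add a := by
    induction a using Quotient.inductionOn with | _ a =>
    refine germ_ext F _ _ _ _ (mem_inf' (Opens.mem_top x) a.1.2)
      le_rfl inf_le_right ?_
    simp only [map_add, map_zero, F.res_res, zero_add]
  add_zero a := by
    induction a using Quotient.inductionOn with | _ a =>
    refine germ_ext F _ _ _ _ (mem_inf' a.1.2 (Opens.mem_top x))
      le_rfl inf_le_left ?_
    simp only [map_add, map_zero, F.res_res, add_zero]
  neg_add_cancel a := by
    induction a using Quotient.inductionOn with | _ a =>
    refine germ_ext F _ _ _ _ (mem_inf' a.1.2 a.1.2)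
      le_rfl (le_top.trans le_rfl) ?_
    simp only [map_add, map_neg, map_zero, F.res_res, neg_add_cancel]
  add_comm a b := by
    induction a using Quotient.inductionOn with | _ a =>
    induction b using Quotient.inductionOn with | _ b =>
    refine germ_ext F _ _ _ _ (mem_inf' a.1.2 b.1.2)
      le_rfl (le_inf inf_le_right inf_le_left) ?_
    simp only [map_add, F.res_res]
    exact add_comm _ _

/-- A morphism of presheaves. -/
structure PshHom (F G : Psh K X) where
  app : ∀ U : Opens X, F.sec U →ₗ[K] G.sec U
  natural : ∀ {U V : Opens X} (h : V ≤ U) (s : F.sec U),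
    G.res h (app U s) = app V (F.res h s)

/-- The map induced on stalks by a morphism of presheaves. -/
def stalkFun {F G : Psh K X} (φ : PshHom F G) (x : X) :
    Stalk F x → Stalk G x :=
  Quotient.map (fun a => ⟨a.1, φ.app a.1.1 a.2⟩)
    (by
      rintro a b ⟨W, hxW, h1, h2, h⟩
      exact ⟨W, hxW, h1, h2, by rw [φ.natural, φ.natural, h]⟩)

/-- Global sections of the sheafification: locally representable families of
germs. -/
def Gsh (F : Psh K X) : Set (∀ x : X, Stalk F x) :=
  {σ | ∀ x : X, ∃ (U : Opens X) (_ : x ∈ U) (s : F.sec U),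
    ∀ y (hy : y ∈ U), σ y = germ F y hy s}

/-- The natural map from global presheaf sections to germ families. -/
def toPi (F : Psh K X) (s : F.sec ⊤) : ∀ x : X, Stalk F x :=
  fun x => germ F x (Opens.mem_top x) s

/-- The differential induced on germ families by a morphism of presheaves. -/
def dPi {F G : Psh K X} (φ : PshHom F G) (σ : ∀ x : X, Stalk F x) :
    ∀ x : X, Stalk G x := fun x => stalkFun φ x (σ x)

/-! ### Auxiliary lemmas -/

theorem germ_res (F : Psh K X) {U V : Opens X} (h : V ≤ U) (x : X) (hxV : x ∈ V)
    (s : F.sec U) : germ F x hxV (F.res h s) = germ F x (h hxV) s :=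
  germ_ext F hxV (h hxV) _ s hxV le_rfl h (F.res_res h le_rfl s)

theorem germ_add (F : Psh K X) {U : Opens X} {x : X} (hx : x ∈ U) (s t : F.sec U) :
    germ F x hx (s + t) = germ F x hx s + germ F x hx t := by
  refine (germ_ext F (mem_inf' hx hx) hx _ _ (mem_inf' hx hx) le_rfl inf_le_left ?_).symm
  rw [F.res_rfl]
  exact (map_add _ s t).symm

theorem germ_zero (F : Psh K X) {U : Opens X} {x : X} (hx : x ∈ U) :
    germ F x hx (0 : F.sec U) = 0 :=
  germ_ext F hx (Opens.mem_top x) _ _ hx le_rfl le_top (by rw [map_zero, map_zero])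

theorem germ_neg (F : Psh K X) {U : Opens X} {x : X} (hx : x ∈ U) (s : F.sec U) :
    germ F x hx (-s) = -germ F x hx s := rfl

theorem germ_sub (F : Psh K X) {U : Opens X} {x : X} (hx : x ∈ U) (s t : F.sec U) :
    germ F x hx (s - t) = germ F x hx s - germ F x hx t := by
  rw [sub_eq_add_neg, sub_eq_add_neg, germ_add, germ_neg]

/-- `germ` as an additive monoid hom. -/
def germHom (F : Psh K X) (U : Opens X) (x : X) (hx : x ∈ U) : F.sec U →+ Stalk F x where
  toFun := germ F x hx
  map_zero' := germ_zero F hx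
  map_add' := germ_add F hx

theorem stalkFun_germ {F G : Psh K X} (φ : PshHom F G) {U : Opens X} (x : X)
    (hx : x ∈ U) (s : F.sec U) :
    stalkFun φ x (germ F x hx s) = germ G x hx (φ.app U s) := rfl

theorem stalkFun_zero {F G : Psh K X} (φ : PshHom F G) (x : X) :
    stalkFun φ x 0 = 0 := by
  show stalkFun φ x (germ F x (Opens.mem_top x) 0) = 0
  rw [stalkFun_germ, map_zero, germ_zero]

theorem stalkFun_add {F G : Psh K X} (φ : PshHom F G) (x : X) (a b : Stalk F x) :
    stalkFun φ x (a + b) = stalkFun φ x a + stalkFun φ x b := by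
  induction a using Quotient.inductionOn with | _ a =>
  induction b using Quotient.inductionOn with | _ b =>
  show germ G x (mem_inf' a.1.2 b.1.2)
      (φ.app _ (F.res inf_le_left a.2 + F.res inf_le_right b.2)) =
    germ G x (mem_inf' a.1.2 b.1.2)
      (G.res inf_le_left (φ.app _ a.2) + G.res inf_le_right (φ.app _ b.2))
  rw [map_add, φ.natural, φ.natural]

/-- Presheaf morphisms preserve local representability of germ families. -/
theorem Gsh_map {F G : Psh K X} (φ : PshHom F G) {t : ∀ x : X, Stalk F x}
    (ht : t ∈ Gsh F) : dPi φ t ∈ Gsh G := by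
  intro x
  obtain ⟨U, hx, r, hr⟩ := ht x
  refine ⟨U, hx, φ.app U r, fun y hy => ?_⟩
  show stalkFun φ y (t y) = _
  rw [hr y hy, stalkFun_germ]

/-- `d ∘ d = 0` on stalks. -/
theorem stalk_dd (F : ℤ → Psh K X) (d : ∀ p : ℤ, PshHom (F p) (F (p + 1)))
    (hdd : ∀ (p : ℤ) (U : Opens X) (s : (F p).sec U),
      (d (p + 1)).app U ((d p).app U s) = 0)
    (p : ℤ) (x : X) (a : Stalk (F p) x) :
    stalkFun (d (p + 1)) x (stalkFun (d p) x a) = 0 := by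
  induction a using Quotient.inductionOn with | _ a =>
  show germ (F (p + 1 + 1)) x a.1.2 ((d (p + 1)).app a.1.1 ((d p).app a.1.1 a.2)) = 0
  rw [hdd, germ_zero]

/-- Covering a compact space by opens on which a locally representable germ
family is matched by global presheaf sections. -/
theorem glue [CompactSpace X] (G : Psh K X)
    (hsurjG : ∀ x : X, Function.Surjective
      (fun s : G.sec ⊤ => germ G x (Opens.mem_top x) s))
    (t : ∀ x : X, Stalk G x) (ht : t ∈ Gsh G) :
    ∃ (fs : Finset X) (N : X → Opens X) (g : X → G.sec ⊤),
      (⨆ i : {x // x ∈ fs}, N i.1) = ⊤ ∧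
      ∀ x : X, ∀ y ∈ N x, germ G y (Opens.mem_top y) (g x) = t y := by
  have key : ∀ x : X, ∃ (N : Opens X) (g : G.sec ⊤), x ∈ N ∧
      ∀ y ∈ N, germ G y (Opens.mem_top y) (g : G.sec ⊤) = t y := by
    intro x
    obtain ⟨U, hxU, r, hr⟩ := ht x
    obtain ⟨g, hg⟩ := hsurjG x (t x)
    rw [hr x hxU] at hg
    obtain ⟨W, hxW, h1, h2, hres⟩ := Quotient.exact hg
    refine ⟨W, g, hxW, fun y hy => ?_⟩
    rw [hr y (h2 hy)]
    exact germ_ext G _ _ _ _ hy h1 h2 hres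
  choose N g hxN hg using key
  have hcov : (Set.univ : Set X) ⊆ ⋃ x : X, (N x : Set X) := fun y _ =>
    Set.mem_iUnion.2 ⟨y, hxN y⟩
  obtain ⟨fs, hfs⟩ := isCompact_univ.elim_finite_subcover
    (fun x => (N x : Set X)) (fun x => (N x).2) hcov
  refine ⟨fs, N, g, ?_, hg⟩
  rw [eq_top_iff]
  intro y _
  obtain ⟨x, hx⟩ := Set.mem_iUnion.1 (hfs (Set.mem_univ y))
  simp only [Set.mem_iUnion] at hx
  obtain ⟨hxfs, hy⟩ := hx
  exact Opens.mem_iSup.2 ⟨⟨x, hxfs⟩, hy⟩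

/-- The key construction: applying the homotopy-fineness operators to global
sections matching a locally representable germ family `t` produces a global
section whose germs are `t + k d t + d k t`. -/
theorem core [CompactSpace X] (F : ℤ → Psh K X)
    (d : ∀ p : ℤ, PshHom (F p) (F (p + 1)))
    (hfine : ∀ (ι : Type) [Fintype ι] (U : ι → Opens X), (⨆ i, U i) = ⊤ →
      ∃ (Fc : ι → Set X), (∀ i, IsClosed (Fc i) ∧ Fc i ⊆ (U i : Set X)) ∧
      ∃ (ℓ : ι → ∀ p : ℤ, PshHom (F p) (F p))
        (k : ∀ p : ℤ, PshHom (F (p + 1)) (F p)),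
        (∀ i (p : ℤ) (V : Opens X), (V : Set X) ∩ Fc i = ∅ →
          ∀ s : (F p).sec V, (ℓ i p).app V s = 0) ∧
        (∀ (p : ℤ) (V : Opens X) (s : (F (p + 1)).sec V),
          ∑ i, (ℓ i (p + 1)).app V s =
            s + (k (p + 1)).app V ((d (p + 1)).app V s) +
              (d p).app V ((k p).app V s)))
    (hsurj : ∀ (p : ℤ) (x : X), Function.Surjective
      (fun s : (F p).sec ⊤ => germ (F p) x (Opens.mem_top x) s))
    (q : ℤ) (t : ∀ x : X, Stalk (F (q + 1)) x) (ht : t ∈ Gsh (F (q + 1))) :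
    ∃ (s : (F (q + 1)).sec ⊤) (k : PshHom (F (q + 1 + 1)) (F (q + 1)))
      (k' : PshHom (F (q + 1)) (F q)),
      ∀ x, toPi (F (q + 1)) s x =
        t x + stalkFun k x (stalkFun (d (q + 1)) x (t x))
            + stalkFun (d q) x (stalkFun k' x (t x)) := by
  obtain ⟨fs, N, g, hcov, hg⟩ := glue (F (q + 1)) (hsurj (q + 1)) t ht
  obtain ⟨Fc, hFc, ℓ, k, hvan, hhom⟩ := hfine {x // x ∈ fs} (fun i => N i.1) hcov
  refine ⟨∑ i : {x // x ∈ fs}, (ℓ i (q + 1)).app ⊤ (g i.1), k (q + 1), k q, fun x => ?_⟩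
  obtain ⟨U, hxU, r, hr⟩ := ht x
  have h1 : toPi (F (q + 1)) (∑ i : {x // x ∈ fs}, (ℓ i (q + 1)).app ⊤ (g i.1)) x
      = ∑ i : {x // x ∈ fs},
          germ (F (q + 1)) x (Opens.mem_top x) ((ℓ i (q + 1)).app ⊤ (g i.1)) :=
    map_sum (germHom (F (q + 1)) ⊤ x (Opens.mem_top x)) _ _
  have h2 : ∀ i : {x // x ∈ fs},
      germ (F (q + 1)) x (Opens.mem_top x) ((ℓ i (q + 1)).app ⊤ (g i.1))
        = germ (F (q + 1)) x hxU ((ℓ i (q + 1)).app U r) := by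
    intro i
    by_cases hx : x ∈ N i.1
    · have e1 : germ (F (q + 1)) x (Opens.mem_top x) ((ℓ i (q + 1)).app ⊤ (g i.1))
          = stalkFun (ℓ i (q + 1)) x (t x) := by
        rw [← hg i.1 x hx]; rfl
      have e2 : germ (F (q + 1)) x hxU ((ℓ i (q + 1)).app U r)
          = stalkFun (ℓ i (q + 1)) x (t x) := by
        rw [hr x hxU]; rfl
      rw [e1, e2]
    · have hxF : x ∉ Fc i := fun h => hx ((hFc i).2 h)
      set V : Opens X := ⟨(Fc i)ᶜ, (hFc i).1.isOpen_compl⟩ with hV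
      have hxV : x ∈ V := hxF
      have eL : germ (F (q + 1)) x (Opens.mem_top x) ((ℓ i (q + 1)).app ⊤ (g i.1)) = 0 := by
        rw [← germ_res (F (q + 1)) le_top x hxV, (ℓ i (q + 1)).natural,
          hvan i (q + 1) V (Set.compl_inter_self (Fc i)), germ_zero]
      have eR : germ (F (q + 1)) x hxU ((ℓ i (q + 1)).app U r) = 0 := by
        rw [← germ_res (F (q + 1)) (inf_le_left : U ⊓ V ≤ U) x (mem_inf' hxU hxV),
          (ℓ i (q + 1)).natural, hvan i (q + 1) (U ⊓ V)
            (Set.eq_empty_iff_forall_notMem.2 fun y hy => hy.1.2 hy.2), germ_zero]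
      rw [eL, eR]
  have h3 : ∑ i : {x // x ∈ fs}, germ (F (q + 1)) x hxU ((ℓ i (q + 1)).app U r)
      = germ (F (q + 1)) x hxU (∑ i : {x // x ∈ fs}, (ℓ i (q + 1)).app U r) :=
    (map_sum (germHom (F (q + 1)) U x hxU) _ _).symm
  rw [h1, Finset.sum_congr rfl fun i _ => h2 i, h3, hhom q U r,
    germ_add, germ_add, hr x hxU]
  rfl

theorem homotopically_fine_differential_presheaf_cohomology
    [CompactSpace X]
    (F : ℤ → Psh K X) (d : ∀ p : ℤ, PshHom (F p) (F (p + 1)))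
    -- `(F̃, d)` is a complex
    (hdd : ∀ (p : ℤ) (U : Opens X) (s : (F p).sec U),
      (d (p + 1)).app U ((d p).app U s) = 0)
    -- `(F̃, d)` is homotopically fine
    (hfine : ∀ (ι : Type) [Fintype ι] (U : ι → Opens X), (⨆ i, U i) = ⊤ →
      ∃ (Fc : ι → Set X), (∀ i, IsClosed (Fc i) ∧ Fc i ⊆ (U i : Set X)) ∧
      ∃ (ℓ : ι → ∀ p : ℤ, PshHom (F p) (F p))
        (k : ∀ p : ℤ, PshHom (F (p + 1)) (F p)),
        (∀ i (p : ℤ) (V : Opens X), (V : Set X) ∩ Fc i = ∅ →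
          ∀ s : (F p).sec V, (ℓ i p).app V s = 0) ∧
        (∀ (p : ℤ) (V : Opens X) (s : (F (p + 1)).sec V),
          ∑ i, (ℓ i (p + 1)).app V s =
            s + (k (p + 1)).app V ((d (p + 1)).app V s) +
              (d p).app V ((k p).app V s)))
    -- surjectivity property for every graded piece
    (hsurj : ∀ (p : ℤ) (x : X), Function.Surjective
      (fun s : (F p).sec ⊤ => germ (F p) x (Opens.mem_top x) s))
    -- injectivity property for every graded piece
    (hinj : ∀ p : ℤ, Function.Injective (toPi (F p))) :
    -- the natural map `F̃(X) → Γ(X, F)` is a chain map …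
    (∀ (p : ℤ) (s : (F p).sec ⊤),
      toPi (F (p + 1)) ((d p).app ⊤ s) = dPi (d p) (toPi (F p) s)) ∧
    -- … inducing a surjection on cohomology in every degree …
    (∀ (p : ℤ) (t : ∀ x : X, Stalk (F (p + 1)) x), t ∈ Gsh (F (p + 1)) →
      dPi (d (p + 1)) t = 0 →
      ∃ s : (F (p + 1)).sec ⊤, (d (p + 1)).app ⊤ s = 0 ∧
        ∃ u ∈ Gsh (F p), toPi (F (p + 1)) s - t = dPi (d p) u) ∧
    -- … and an injection on cohomology in every degree
    (∀ (p : ℤ) (s : (F (p + 1)).sec ⊤), (d (p + 1)).app ⊤ s = 0 →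
      (∃ u ∈ Gsh (F p), toPi (F (p + 1)) s = dPi (d p) u) →
      ∃ v : (F p).sec ⊤, s = (d p).app ⊤ v) := by
  refine ⟨fun p s => funext fun x => rfl, ?_, ?_⟩
  · -- surjectivity on cohomology
    intro p t ht hdt
    obtain ⟨s, k, k', hs⟩ := core F d hfine hsurj p t ht
    have hz : ∀ x, stalkFun (d (p + 1)) x (t x) = 0 := fun x => congrFun hdt x
    have hs2 : ∀ x, toPi (F (p + 1)) s x
        = t x + stalkFun (d p) x (stalkFun k' x (t x)) := by
      intro x
      rw [hs x, hz x, stalkFun_zero, add_zero]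
    refine ⟨s, ?_, dPi k' t, Gsh_map k' ht, ?_⟩
    · apply hinj (p + 1 + 1)
      funext x
      show stalkFun (d (p + 1)) x (toPi (F (p + 1)) s x) = (0 : Stalk (F (p + 1 + 1)) x)
      rw [hs2 x, stalkFun_add, hz x, stalk_dd F d hdd p x, add_zero]
    · funext x
      show toPi (F (p + 1)) s x - t x = stalkFun (d p) x (stalkFun k' x (t x))
      rw [hs2 x, add_sub_cancel_left]
  · -- injectivity on cohomology
    intro p s _hclosed hex
    obtain ⟨q, rfl⟩ : ∃ q, q + 1 = p := ⟨p - 1, by omega⟩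
    obtain ⟨u, hu, hdu⟩ := hex
    obtain ⟨v₀, k, k', hv⟩ := core F d hfine hsurj q u hu
    have hmid : ∀ x, stalkFun (d (q + 1)) x (u x) = toPi (F (q + 1 + 1)) s x :=
      fun x => (congrFun hdu x).symm
    refine ⟨v₀ - k.app ⊤ s, (hinj (q + 1 + 1) ?_).symm⟩
    funext x
    show stalkFun (d (q + 1)) x
        (germ (F (q + 1)) x (Opens.mem_top x) (v₀ - k.app ⊤ s))
      = toPi (F (q + 1 + 1)) s x
    rw [germ_sub]
    have e1 : germ (F (q + 1)) x (Opens.mem_top x) v₀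
        = u x + stalkFun k x (toPi (F (q + 1 + 1)) s x)
            + stalkFun (d q) x (stalkFun k' x (u x)) := by
      rw [← hmid x]; exact hv x
    have e2 : stalkFun k x (toPi (F (q + 1 + 1)) s x)
        = germ (F (q + 1)) x (Opens.mem_top x) (k.app ⊤ s) := rfl
    rw [e1, e2]
    have e3 : u x + germ (F (q + 1)) x (Opens.mem_top x) (k.app ⊤ s)
          + stalkFun (d q) x (stalkFun k' x (u x))
          - germ (F (q + 1)) x (Opens.mem_top x) (k.app ⊤ s)
        = u x + stalkFun (d q) x (stalkFun k' x (u x)) := by abel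
    rw [e3, stalkFun_add, stalk_dd F d hdd q x, hmid x, add_zero]

end Stmt5
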